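/- For the Pareto-type tail 1 - F(x) = A x^{-α}(1 + B x^{-β} + o(x^{-β})) as x → ∞ (A > 0, α > 0, β > 0, B ≠ 0), and x_n with A m_n x_n^{-α} = δ fixed (δ > 0), the approximation error satisfies F(x_n)^{m_n} - exp(-δ) = O(m_n^{-(β/α) ∧ 1} ). -/

import Mathlib

open Filter Topology Real

lemma log_one_sub_bound {t : ℝ} (h0 : 0 ≤ t) (h2 : t ≤ 1/2) :
    |Real.log (1 - t) + t| ≤ 2 * t ^ 2 := by
  have h1 : (0:ℝ) < 1 - t := by linarith
  have hub : Real.log (1 - t) ≤ -t := by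
    have := Real.log_le_sub_one_of_pos h1; linarith
  have hlb : -Real.log (1 - t) ≤ t / (1 - t) := by
    have h2' : (0:ℝ) < (1 - t)⁻¹ := by positivity
    have h3 := Real.log_le_sub_one_of_pos h2'
    rw [Real.log_inv] at h3
    have : (1 - t)⁻¹ - 1 = t / (1 - t) := by field_simp; ring
    linarith
  have hfr : t / (1 - t) ≤ t + 2 * t ^ 2 := by
    rw [div_le_iff₀ h1]; nlinarith
  rw [abs_le]; constructor <;> nlinarith


set_option maxHeartbeats 1000000 in
/-- Hall-class second-order rate. If
`1 - F(x) = A x^{-α}(1 + B x^{-β} + o(x^{-β}))` as `x → ∞` (`A, α, β > 0`, `B ≠ 0`),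
`m_n → ∞` and `x_n = (A m_n/δ)^{1/α}` (so `A m_n x_n^{-α} ≡ δ > 0`), then
`|F(x_n)^{m_n} - e^{-δ}| ≤ C m_n^{-min(β/α,1)}` eventually, for some `C > 0`. -/
theorem stmt15 (F : ℝ → ℝ) (A α β B δ : ℝ)
    (hA : 0 < A) (hα : 0 < α) (hβ : 0 < β) (hB : B ≠ 0) (hδ : 0 < δ)
    (hF01 : ∀ x, F x ∈ Set.Icc (0 : ℝ) 1)
    (htail : Tendsto (fun X : ℝ =>
        X ^ (α + β) * (1 - F X - A * X ^ (-α) * (1 + B * X ^ (-β)))) atTop (𝓝 0))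
    (m : ℕ → ℕ) (hm : Tendsto m atTop atTop)
    (x : ℕ → ℝ) (hx : ∀ n, x n = (A * (m n : ℝ) / δ) ^ (1 / α)) :
    ∃ C > (0 : ℝ), ∃ N : ℕ, ∀ n ≥ N,
      |(F (x n)) ^ (m n) - Real.exp (-δ)|
        ≤ C * (m n : ℝ) ^ (-(min (β / α) 1)) := by
  set P : ℝ := (δ / A) ^ (β / α) with hP
  have hPpos : 0 < P := Real.rpow_pos_of_pos (by positivity) _
  set K₁ : ℝ := (δ / A + δ * |B|) * P with hK₁
  have hK₁pos : 0 < K₁ := by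
    have : (0:ℝ) < δ / A + δ * |B| := by positivity
    positivity
  set K₂ : ℝ := K₁ + 8 * δ ^ 2 with hK₂
  have hK₂pos : 0 < K₂ := by positivity
  refine ⟨2 * K₂ * Real.exp (-δ), by positivity, ?_⟩
  set r : ℕ → ℝ := fun n => (x n) ^ (α + β) *
      (1 - F (x n) - A * (x n) ^ (-α) * (1 + B * (x n) ^ (-β))) with hr
  have hμt : Tendsto (fun n => (m n : ℝ)) atTop atTop :=
    tendsto_natCast_atTop_atTop.comp hm
  have hct : Tendsto (fun n => A * (m n : ℝ) / δ) atTop atTop := by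
    apply Tendsto.atTop_div_const hδ
    exact hμt.const_mul_atTop hA
  have hxtop : Tendsto x atTop atTop := by
    have hxe : x = (fun c : ℝ => c ^ (1/α)) ∘ (fun n => A * (m n : ℝ) / δ) :=
      funext fun n => hx n
    rw [hxe]
    exact (tendsto_rpow_atTop (by positivity)).comp hct
  have hrt : Tendsto r atTop (𝓝 0) := htail.comp hxtop
  have hmin : 0 < min (β / α) 1 := lt_min (by positivity) one_pos
  have hQmin : Tendsto (fun n => (m n : ℝ) ^ (-(min (β / α) 1))) atTop (𝓝 0) :=
    (tendsto_rpow_neg_atTop hmin).comp hμt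
  have hQβ : Tendsto (fun n => (m n : ℝ) ^ (-(β / α))) atTop (𝓝 0) :=
    (tendsto_rpow_neg_atTop (by positivity)).comp hμt
  have E1 : ∀ᶠ n in atTop, 1 ≤ m n := hm.eventually_ge_atTop 1
  have E2 : ∀ᶠ n in atTop, |r n| ≤ 1 := by
    have := hrt.abs
    simp only [abs_zero] at this
    exact (this.eventually_lt_const one_pos).mono fun n h => h.le
  have E3 : ∀ᶠ n in atTop, K₁ * (m n : ℝ) ^ (-(β / α)) ≤ δ := by
    have h0 : Tendsto (fun n => K₁ * (m n : ℝ) ^ (-(β / α))) atTop (𝓝 0) := by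
      simpa using hQβ.const_mul K₁
    exact (h0.eventually_lt_const hδ).mono fun n h => h.le
  have E4 : ∀ᶠ n in atTop, 4 * δ ≤ (m n : ℝ) := hμt.eventually_ge_atTop (4 * δ)
  have E5 : ∀ᶠ n in atTop, K₂ * (m n : ℝ) ^ (-(min (β / α) 1)) ≤ 1 := by
    have h0 : Tendsto (fun n => K₂ * (m n : ℝ) ^ (-(min (β / α) 1))) atTop (𝓝 0) := by
      simpa using hQmin.const_mul K₂
    exact (h0.eventually_lt_const one_pos).mono fun n h => h.le
  have main : ∀ᶠ n in atTop, |(F (x n)) ^ (m n) - Real.exp (-δ)|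
      ≤ 2 * K₂ * Real.exp (-δ) * (m n : ℝ) ^ (-(min (β / α) 1)) := by
    filter_upwards [E1, E2, E3, E4, E5] with n h1 h2 h3 h4 h5
    set μ : ℝ := (m n : ℝ) with hμdef
    have hμ1 : (1:ℝ) ≤ μ := by rw [hμdef]; exact_mod_cast h1
    have hμpos : (0:ℝ) < μ := by linarith
    have hc0 : (0:ℝ) < A * μ / δ := by positivity
    have hxpos : 0 < x n := by
      rw [hx n]; exact Real.rpow_pos_of_pos hc0 _
    have hxs : ∀ s : ℝ, (x n) ^ s = (A * μ / δ) ^ (s / α) := by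
      intro s
      rw [hx n, ← Real.rpow_mul hc0.le]
      congr 1; field_simp
    set Q : ℝ := μ ^ (-(β / α)) with hQ
    have hQpos : 0 < Q := Real.rpow_pos_of_pos hμpos _
    have hcQ : (A * μ / δ) ^ (-(β / α)) = P * Q := by
      have hmd : A * μ / δ = (A / δ) * μ := by ring
      rw [hmd, Real.mul_rpow (by positivity) (by positivity)]
      congr 1
      rw [Real.rpow_neg (by positivity), hP, ← Real.inv_rpow (by positivity), inv_div]
    have hxa : A * (x n) ^ (-α) = δ / μ := by
      rw [hxs, show -α / α = -1 by field_simp, Real.rpow_neg_one]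
      field_simp
    have hxb : (x n) ^ (-β) = P * Q := by
      rw [hxs, show -β / α = -(β / α) by ring, hcQ]
    have hxab : (x n) ^ (-(α + β)) = (δ / A) * μ⁻¹ * (P * Q) := by
      rw [hxs, show -(α + β) / α = -1 + -(β / α) by field_simp; ring,
        Real.rpow_add hc0, Real.rpow_neg_one, hcQ]
      field_simp
    have hone : (x n) ^ (α + β) * (x n) ^ (-(α + β)) = 1 := by
      rw [← Real.rpow_add hxpos, show α + β + -(α + β) = 0 by ring, Real.rpow_zero]
    set t : ℝ := 1 - F (x n) with ht_def
    have hFt : F (x n) = 1 - t := by rw [ht_def]; ring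
    have ht0 : 0 ≤ t := by
      have := (hF01 (x n)).2; rw [ht_def]; linarith
    have hD : 1 - F (x n) - A * (x n) ^ (-α) * (1 + B * (x n) ^ (-β))
        = r n * ((x n) ^ (-(α + β))) := by
      have hrn : r n = (x n) ^ (α + β) *
          (1 - F (x n) - A * (x n) ^ (-α) * (1 + B * (x n) ^ (-β))) := by
        rw [hr]
      calc 1 - F (x n) - A * (x n) ^ (-α) * (1 + B * (x n) ^ (-β))
          = (1 - F (x n) - A * (x n) ^ (-α) * (1 + B * (x n) ^ (-β)))
            * ((x n) ^ (α + β) * (x n) ^ (-(α + β))) := by rw [hone, mul_one]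
        _ = r n * ((x n) ^ (-(α + β))) := by rw [hrn]; ring
    have ht_eq : t = δ / μ + (δ / μ) * B * (P * Q)
        + r n * ((δ / A) * μ⁻¹ * (P * Q)) := by
      rw [hxa, hxb, hxab] at hD
      rw [ht_def]; linarith [hD]
    have hkey : |μ * t - δ| ≤ K₁ * Q := by
      have heq : μ * t - δ = δ * B * (P * Q) + r n * ((δ / A) * (P * Q)) := by
        rw [ht_eq]; field_simp; ring
      calc |μ * t - δ| = |δ * B * (P * Q) + r n * ((δ / A) * (P * Q))| := by rw [heq]
        _ ≤ |δ * B * (P * Q)| + |r n * ((δ / A) * (P * Q))| := abs_add_le _ _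
        _ ≤ δ * |B| * (P * Q) + 1 * ((δ / A) * (P * Q)) := by
            have a1 : |δ * B * (P * Q)| = δ * |B| * (P * Q) := by
              rw [abs_mul, abs_mul, abs_of_pos hδ, abs_of_pos (mul_pos hPpos hQpos)]
            have a2 : |r n * ((δ / A) * (P * Q))| ≤ 1 * ((δ / A) * (P * Q)) := by
              rw [abs_mul]
              apply mul_le_mul h2 (le_of_eq (abs_of_pos (by positivity)))
                (abs_nonneg _) zero_le_one
            linarith
        _ = K₁ * Q := by rw [hK₁]; ring
    have hKQ : K₁ * Q ≤ δ := h3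
    have hμt2 : μ * t ≤ 2 * δ := by
      have := abs_le.mp hkey
      linarith [this.2]
    have ht_le : t ≤ 2 * δ / μ := by
      rw [le_div_iff₀ hμpos]
      nlinarith [hμt2]
    have ht_half : t ≤ 1 / 2 := by
      have : 2 * δ / μ ≤ 1 / 2 := by
        rw [div_le_div_iff₀ hμpos (by norm_num)]
        linarith
      linarith
    have hFpos : 0 < F (x n) := by rw [hFt]; linarith
    have hlog := log_one_sub_bound ht0 ht_half
    have hmono1 : μ ^ (-(β / α)) ≤ μ ^ (-(min (β / α) 1)) :=
      Real.rpow_le_rpow_of_exponent_le hμ1 (neg_le_neg (min_le_left _ _))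
    have hmono2 : μ⁻¹ ≤ μ ^ (-(min (β / α) 1)) := by
      rw [← Real.rpow_neg_one μ]
      exact Real.rpow_le_rpow_of_exponent_le hμ1 (neg_le_neg (min_le_right _ _))
    have ha : |μ * Real.log (F (x n)) + δ| ≤ K₂ * μ ^ (-(min (β / α) 1)) := by
      have hsq : μ * (2 * t ^ 2) ≤ 8 * δ ^ 2 * μ⁻¹ := by
        have hsq1 : t ^ 2 ≤ (2 * δ / μ) ^ 2 := by nlinarith
        have hsq2 : μ * (2 * t ^ 2) ≤ μ * (2 * (2 * δ / μ) ^ 2) := by nlinarith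
        have hexp : μ * (2 * (2 * δ / μ) ^ 2) = 8 * δ ^ 2 * μ⁻¹ := by
          field_simp; ring
        linarith
      have habs : |μ * Real.log (F (x n)) + δ|
          ≤ μ * |Real.log (1 - t) + t| + |μ * t - δ| := by
        rw [hFt]
        have : μ * Real.log (1 - t) + δ
            = μ * (Real.log (1 - t) + t) + -(μ * t - δ) := by ring
        rw [this]
        refine (abs_add_le _ _).trans ?_
        rw [abs_mul, abs_of_pos hμpos, abs_neg]
      have step1 : μ * |Real.log (1 - t) + t| ≤ 8 * δ ^ 2 * μ⁻¹ := by
        have h7 : μ * |Real.log (1 - t) + t| ≤ μ * (2 * t ^ 2) :=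
          mul_le_mul_of_nonneg_left hlog hμpos.le
        exact le_trans h7 hsq
      have : |μ * Real.log (F (x n)) + δ| ≤ 8 * δ ^ 2 * μ⁻¹ + K₁ * Q := by
        linarith
      refine this.trans ?_
      rw [hK₂]
      have b1 : 8 * δ ^ 2 * μ⁻¹ ≤ 8 * δ ^ 2 * μ ^ (-(min (β / α) 1)) := by
        apply mul_le_mul_of_nonneg_left hmono2 (by positivity)
      have b2 : K₁ * Q ≤ K₁ * μ ^ (-(min (β / α) 1)) := by
        apply mul_le_mul_of_nonneg_left hmono1 hK₁pos.le
      linarith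
    have hFpow : (F (x n)) ^ (m n) = Real.exp (μ * Real.log (F (x n))) := by
      conv_lhs => rw [← Real.exp_log hFpos]
      rw [← Real.exp_nat_mul]
    set a : ℝ := μ * Real.log (F (x n)) with ha_def
    have h6 : Real.exp a - Real.exp (-δ) = Real.exp (-δ) * (Real.exp (a + δ) - 1) := by
      rw [mul_sub, ← Real.exp_add, mul_one]
      have : -δ + (a + δ) = a := by ring
      rw [this]
    have habs1 : |a + δ| ≤ 1 := le_trans ha h5
    have hexp1 : |Real.exp (a + δ) - 1| ≤ 2 * |a + δ| := Real.abs_exp_sub_one_le habs1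
    calc |(F (x n)) ^ (m n) - Real.exp (-δ)|
        = Real.exp (-δ) * |Real.exp (a + δ) - 1| := by
          rw [hFpow, h6, abs_mul, abs_of_pos (Real.exp_pos _)]
      _ ≤ Real.exp (-δ) * (2 * (K₂ * μ ^ (-(min (β / α) 1)))) := by
          apply mul_le_mul_of_nonneg_left _ (Real.exp_pos _).le
          refine hexp1.trans ?_
          linarith [ha]
      _ = 2 * K₂ * Real.exp (-δ) * μ ^ (-(min (β / α) 1)) := by ring
  obtain ⟨N, hN⟩ := eventually_atTop.mp main
  exact ⟨N, hN⟩
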